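/- For every x ∈ [0,L] and every t ≥ 0, |c̄(x,t) − βDt/L − (c_I − βx(1 − x/(2L)) + βL/3)| ≤ (|β| L / 3) · exp(−(π/L)² D t); in particular, for each x ∈ [0,L], c̄(x,t) − βDt/L converges to c_I − βx(1 − x/(2L)) + βL/3 as t → ∞. -/

import Mathlib

set_option maxHeartbeats 1000000

open Real Filter

/-- For every `x ∈ [0,L]` and `t ≥ 0`,
`|c̄(x,t) − βDt/L − (c_I − βx(1 − x/(2L)) + βL/3)| ≤ (|β| L / 3) · exp(−(π/L)² D t)`;
in particular, for each `x ∈ [0,L]`, `c̄(x,t) − βDt/L` converges to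
`c_I − βx(1 − x/(2L)) + βL/3` as `t → ∞`. -/
theorem stmt_11 (L D β cI : ℝ) (hL : 0 < L) (hD : 0 < D)
    (cbar : ℝ × ℝ → ℝ)
    (hcbar : ∀ x t : ℝ, cbar (x, t) =
      cI - β * x * (1 - x / (2 * L)) + β * D * t / L +
        2 * β * L * (1 / 6 -
          ∑' n : ℕ, (1 / (((n : ℝ) + 1) ^ 2 * Real.pi ^ 2)) *
            Real.cos (((n : ℝ) + 1) * Real.pi * x / L) *
            Real.exp (-((((n : ℝ) + 1) * Real.pi / L) ^ 2 * D * t))) ) :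
    (∀ x : ℝ, 0 ≤ x → x ≤ L → ∀ t : ℝ, 0 ≤ t →
      |cbar (x, t) - β * D * t / L -
          (cI - β * x * (1 - x / (2 * L)) + β * L / 3)| ≤
        |β| * L / 3 * Real.exp (-(Real.pi / L) ^ 2 * D * t)) ∧
    (∀ x : ℝ, 0 ≤ x → x ≤ L →
      Tendsto (fun t : ℝ => cbar (x, t) - β * D * t / L) atTop
        (nhds (cI - β * x * (1 - x / (2 * L)) + β * L / 3))) := by
  -- Basel-type sum
  have hbasel : HasSum (fun n : ℕ => (1 : ℝ) / (((n : ℝ) + 1) ^ 2)) (π ^ 2 / 6) := by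
    have h := hasSum_zeta_two
    rw [← hasSum_nat_add_iff' 1] at h
    simpa using h
  have hsum2 : Summable (fun n : ℕ => (1 : ℝ) / (((n : ℝ) + 1) ^ 2)) := hbasel.summable
  have hpi2 : (0:ℝ) < π ^ 2 := by positivity
  -- main bound
  have key : ∀ x : ℝ, 0 ≤ x → x ≤ L → ∀ t : ℝ, 0 ≤ t →
      |cbar (x, t) - β * D * t / L -
          (cI - β * x * (1 - x / (2 * L)) + β * L / 3)| ≤
        |β| * L / 3 * Real.exp (-(Real.pi / L) ^ 2 * D * t) := by
    intro x hx0 hxL t ht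
    set E : ℝ := Real.exp (-(Real.pi / L) ^ 2 * D * t) with hE
    have hEpos : 0 < E := Real.exp_pos _
    set f : ℕ → ℝ := fun n => (1 / (((n : ℝ) + 1) ^ 2 * Real.pi ^ 2)) *
            Real.cos (((n : ℝ) + 1) * Real.pi * x / L) *
            Real.exp (-((((n : ℝ) + 1) * Real.pi / L) ^ 2 * D * t)) with hf
    set g : ℕ → ℝ := fun n => (1 / (((n : ℝ) + 1) ^ 2 * Real.pi ^ 2)) * E with hg
    have hgsum : Summable g := by
      have : Summable (fun n : ℕ => ((1:ℝ) / (((n : ℝ) + 1) ^ 2)) * (E / π ^ 2)) :=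
        hsum2.mul_right _
      refine this.congr fun n => ?_
      simp only [hg]
      field_simp
    have hfg : ∀ n, |f n| ≤ g n := by
      intro n
      have hn1 : (0:ℝ) < (n : ℝ) + 1 := by positivity
      have hc : |Real.cos (((n : ℝ) + 1) * Real.pi * x / L)| ≤ 1 := Real.abs_cos_le_one _
      have hexp : Real.exp (-((((n : ℝ) + 1) * Real.pi / L) ^ 2 * D * t)) ≤ E := by
        rw [hE]
        apply Real.exp_le_exp.2
        have h1 : (Real.pi / L) ^ 2 ≤ (((n : ℝ) + 1) * Real.pi / L) ^ 2 := by
          apply pow_le_pow_left₀ (by positivity)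
          rw [div_le_div_iff_of_pos_right hL]
          nlinarith [Real.pi_pos, hn1]
        nlinarith [mul_nonneg (mul_nonneg (sub_nonneg.2 h1) hD.le) ht]
      have hpos : (0:ℝ) ≤ 1 / (((n : ℝ) + 1) ^ 2 * Real.pi ^ 2) := by positivity
      have hexp_pos : (0:ℝ) ≤ Real.exp (-((((n : ℝ) + 1) * Real.pi / L) ^ 2 * D * t)) :=
        (Real.exp_pos _).le
      have heq : |f n| = (1 / (((n : ℝ) + 1) ^ 2 * Real.pi ^ 2)) *
              |Real.cos (((n : ℝ) + 1) * Real.pi * x / L)| *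
              Real.exp (-((((n : ℝ) + 1) * Real.pi / L) ^ 2 * D * t)) := by
        rw [hf]
        rw [abs_mul, abs_mul, abs_of_nonneg hpos, abs_of_nonneg hexp_pos]
      rw [heq, hg]
      calc (1 / (((n : ℝ) + 1) ^ 2 * Real.pi ^ 2)) *
              |Real.cos (((n : ℝ) + 1) * Real.pi * x / L)| *
              Real.exp (-((((n : ℝ) + 1) * Real.pi / L) ^ 2 * D * t))
          ≤ (1 / (((n : ℝ) + 1) ^ 2 * Real.pi ^ 2)) * 1 * E := by
            apply mul_le_mul (by nlinarith) hexp hexp_pos (by positivity)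
        _ = (1 / (((n : ℝ) + 1) ^ 2 * Real.pi ^ 2)) * E := by ring
    have habs_sum : Summable (fun n => |f n|) :=
      hgsum.of_nonneg_of_le (fun n => abs_nonneg _) hfg
    have hfsum : Summable f := habs_sum.of_abs
    have htsumg : ∑' n, g n = E / 6 := by
      have : HasSum g ((π ^ 2 / 6) * (E / π ^ 2)) := by
        have := hbasel.mul_right (E / π ^ 2)
        refine this.congr_fun fun n => ?_
        simp only [hg]; field_simp
      rw [this.tsum_eq]; field_simp
    have habs : |∑' n, f n| ≤ E / 6 := by
      rw [← htsumg]
      have h1 : ‖∑' n, f n‖ ≤ ∑' n, ‖f n‖ :=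
        norm_tsum_le_tsum_norm (by simpa [Real.norm_eq_abs] using habs_sum)
      simp only [Real.norm_eq_abs] at h1
      exact h1.trans (Summable.tsum_le_tsum hfg habs_sum hgsum)
    have hval : cbar (x, t) - β * D * t / L - (cI - β * x * (1 - x / (2 * L)) + β * L / 3)
        = -(2 * β * L) * ∑' n, f n := by
      rw [hcbar x t]; ring
    rw [hval, abs_mul]
    have h2 : |(-(2 * β * L))| = 2 * |β| * L := by
      rw [abs_neg, abs_mul, abs_mul]
      simp [abs_of_pos hL, abs_of_nonneg, mul_comm]
    rw [h2]
    calc 2 * |β| * L * |∑' n, f n| ≤ 2 * |β| * L * (E / 6) := by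
          apply mul_le_mul_of_nonneg_left habs (by positivity)
      _ = |β| * L / 3 * E := by ring
  refine ⟨key, ?_⟩
  intro x hx0 hxL
  have hlim : Tendsto (fun t : ℝ => |β| * L / 3 * Real.exp (-(Real.pi / L) ^ 2 * D * t))
      atTop (nhds 0) := by
    have : Tendsto (fun t : ℝ => Real.exp (-(Real.pi / L) ^ 2 * D * t)) atTop (nhds 0) := by
      apply Real.tendsto_exp_atBot.comp
      have hc : -(Real.pi / L) ^ 2 * D < 0 := by
        have : (0:ℝ) < (Real.pi / L) ^ 2 := by positivity
        nlinarith
      exact tendsto_id.const_mul_atTop_of_neg hc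
    simpa using this.const_mul (|β| * L / 3)
  have h0 : Tendsto (fun t : ℝ => cbar (x, t) - β * D * t / L -
      (cI - β * x * (1 - x / (2 * L)) + β * L / 3)) atTop (nhds 0) := by
    apply squeeze_zero_norm' _ hlim
    filter_upwards [eventually_ge_atTop (0:ℝ)] with t ht
    simpa using key x hx0 hxL t ht
  have := h0.add_const (cI - β * x * (1 - x / (2 * L)) + β * L / 3)
  simpa using this
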